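/- For g = (A B; C D) ∈ U(n,n) (with φ_d = diag(E,−E)) and Z ∈ U(n), the matrix CZ + D is invertible and (AZ + B)(CZ + D)^{-1} ∈ U(n), i.e. the action σ_g(Z) = (AZ+B)(CZ+D)^{-1} is well-defined on U(n). -/

import Mathlib

open Matrix

theorem unn_action_on_unitary_welldefined (n : ℕ)
    (A B C D : Matrix (Fin n) (Fin n) ℂ)
    (hg : (Matrix.fromBlocks A B C D)ᴴ * Matrix.fromBlocks 1 0 0 (-1) *
        Matrix.fromBlocks A B C D = Matrix.fromBlocks 1 0 0 (-1))
    (Z : Matrix (Fin n) (Fin n) ℂ) (hZ : Z ∈ Matrix.unitaryGroup (Fin n) ℂ) :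
    IsUnit (C * Z + D) ∧
      (A * Z + B) * (C * Z + D)⁻¹ ∈ Matrix.unitaryGroup (Fin n) ℂ := by
  have hZZ : Zᴴ * Z = 1 := Matrix.mem_unitaryGroup_iff'.mp hZ
  -- rewrite hg in block form
  have hg2 : Matrix.fromBlocks (Aᴴ*A - Cᴴ*C) (Aᴴ*B - Cᴴ*D) (Bᴴ*A - Dᴴ*C) (Bᴴ*B - Dᴴ*D)
      = Matrix.fromBlocks 1 0 0 (-1 : Matrix (Fin n) (Fin n) ℂ) := by
    rw [← hg, fromBlocks_conjTranspose, fromBlocks_multiply, fromBlocks_multiply]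
    congr 1 <;> noncomm_ring
  have e11 : Aᴴ*A - Cᴴ*C = 1 := by
    have := congrArg Matrix.toBlocks₁₁ hg2; simpa using this
  have e12 : Aᴴ*B - Cᴴ*D = 0 := by
    have := congrArg Matrix.toBlocks₁₂ hg2; simpa using this
  have e21 : Bᴴ*A - Dᴴ*C = 0 := by
    have := congrArg Matrix.toBlocks₂₁ hg2; simpa using this
  have e22 : Bᴴ*B - Dᴴ*D = -1 := by
    have := congrArg Matrix.toBlocks₂₂ hg2; simpa using this
  -- key identity
  have hkey : (C*Z+D)ᴴ * (C*Z+D) = (A*Z+B)ᴴ * (A*Z+B) := by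
    have expand : (A*Z+B)ᴴ * (A*Z+B) - (C*Z+D)ᴴ * (C*Z+D)
        = Zᴴ * (Aᴴ*A - Cᴴ*C) * Z + Zᴴ * (Aᴴ*B - Cᴴ*D) + (Bᴴ*A - Dᴴ*C) * Z
          + (Bᴴ*B - Dᴴ*D) := by
      simp only [conjTranspose_add, conjTranspose_mul]
      noncomm_ring
    rw [e11, e12, e21, e22] at expand
    have expand2 : (A*Z+B)ᴴ * (A*Z+B) - (C*Z+D)ᴴ * (C*Z+D) = 0 := by
      rw [expand, Matrix.mul_one, hZZ]
      simp
    exact (sub_eq_zero.mp expand2).symm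
  -- det g ≠ 0
  have hdetφ : (Matrix.fromBlocks (1 : Matrix (Fin n) (Fin n) ℂ) (0 : Matrix (Fin n) (Fin n) ℂ) (0 : Matrix (Fin n) (Fin n) ℂ) (-1 : Matrix (Fin n) (Fin n) ℂ)).det ≠ 0 := by
    rw [Matrix.det_fromBlocks_zero₂₁]
    simp [Matrix.det_neg]
  have hdetg : (Matrix.fromBlocks A B C D).det ≠ 0 := by
    intro h0
    apply hdetφ
    have := congrArg Matrix.det hg
    rw [Matrix.det_mul, Matrix.det_mul, h0, mul_zero] at this
    exact this.symm
  have hM : IsUnit (C*Z+D) := by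
    rw [Matrix.isUnit_iff_isUnit_det, isUnit_iff_ne_zero]
    intro hdet
    obtain ⟨v, hv, hMv⟩ := Matrix.exists_mulVec_eq_zero_iff.mpr hdet
    have hNv : (A*Z+B) *ᵥ v = 0 := by
      have h0 : star ((A*Z+B) *ᵥ v) ⬝ᵥ ((A*Z+B) *ᵥ v) = 0 := by
        rw [Matrix.star_mulVec, Matrix.dotProduct_mulVec, Matrix.vecMul_vecMul,
          ← Matrix.dotProduct_mulVec, ← hkey, Matrix.dotProduct_mulVec,
          ← Matrix.vecMul_vecMul, ← Matrix.dotProduct_mulVec, ← Matrix.star_mulVec,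
          hMv]
        simp
      have hre : ∑ i, Complex.normSq (((A*Z+B) *ᵥ v) i) = 0 := by
        have := congrArg Complex.re h0
        simpa [dotProduct, Complex.normSq_eq_conj_mul_self, Complex.normSq_apply] using this
      funext i
      have hnn : ∀ i ∈ Finset.univ, 0 ≤ Complex.normSq (((A*Z+B) *ᵥ v) i) :=
        fun i _ => Complex.normSq_nonneg _
      have := (Finset.sum_eq_zero_iff_of_nonneg hnn).mp hre i (Finset.mem_univ i)
      simpa using Complex.normSq_eq_zero.mp this
    apply hdetg
    rw [← Matrix.exists_mulVec_eq_zero_iff]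
    refine ⟨Sum.elim (Z *ᵥ v) v, ?_, ?_⟩
    · intro h
      apply hv
      funext i
      exact congrFun h (Sum.inr i)
    · rw [Matrix.fromBlocks_mulVec]
      have h1 : A *ᵥ (Z *ᵥ v) + B *ᵥ v = (A*Z+B) *ᵥ v := by
        rw [Matrix.mulVec_mulVec, Matrix.add_mulVec]
      have h2 : C *ᵥ (Z *ᵥ v) + D *ᵥ v = (C*Z+D) *ᵥ v := by
        rw [Matrix.mulVec_mulVec, Matrix.add_mulVec]
      simp only [Sum.elim_comp_inl, Sum.elim_comp_inr]
      rw [h1, h2, hNv, hMv]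
      simp
  refine ⟨hM, ?_⟩
  have hMM : (C*Z+D) * (C*Z+D)⁻¹ = 1 :=
    Matrix.mul_nonsing_inv _ ((Matrix.isUnit_iff_isUnit_det _).mp hM)
  rw [Matrix.mem_unitaryGroup_iff']
  have : star ((A*Z+B) * (C*Z+D)⁻¹) * ((A*Z+B) * (C*Z+D)⁻¹)
      = ((C*Z+D) * (C*Z+D)⁻¹)ᴴ * ((C*Z+D) * (C*Z+D)⁻¹) := by
    simp only [Matrix.star_eq_conjTranspose, conjTranspose_mul]
    calc (C*Z+D)⁻¹ᴴ * (A*Z+B)ᴴ * ((A*Z+B) * (C*Z+D)⁻¹)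
        = (C*Z+D)⁻¹ᴴ * ((A*Z+B)ᴴ * (A*Z+B)) * (C*Z+D)⁻¹ := by
          noncomm_ring
      _ = (C*Z+D)⁻¹ᴴ * ((C*Z+D)ᴴ * (C*Z+D)) * (C*Z+D)⁻¹ := by rw [hkey]
      _ = (C*Z+D)⁻¹ᴴ * (C*Z+D)ᴴ * ((C*Z+D) * (C*Z+D)⁻¹) := by noncomm_ring
  rw [this, hMM]
  simp
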